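/- Let a, b, c, d, p, q, r be real numbers with a > 0, b > 0, c ≥ 0, d ≥ 0, p ≥ 0, r ≥ 0, q > 0, q ≥ |p − r| and a·b ≥ c·d. Define f(u,v) = u^r v^p (a v^q − c u^q) and g(u,v) = v^r u^p (b u^q − d v^q) for u, v ≥ 0, and let K > 0 be the unique constant with (f(u,v) − K g(u,v))·(u − K v) ≤ 0 for all u, v ≥ 0. Then K = 1 if and only if a + d = b + c, and K > 1 if and only if a + d > b + c. -/
import Mathlib

open Filter Set Topology

/-- K = 1 iff a + d = b + c, and K > 1 iff a + d > b + c. -/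
theorem stmt_2 (a b c d p q r : ℝ)
    (ha : 0 < a) (hb : 0 < b) (hc : 0 ≤ c) (hd : 0 ≤ d)
    (hp : 0 ≤ p) (hr : 0 ≤ r) (hq : 0 < q) (hqpr : |p - r| ≤ q)
    (habcd : c * d ≤ a * b) (K : ℝ) (hK : 0 < K)
    (hKprop : ∀ u v : ℝ, 0 ≤ u → 0 ≤ v →
      (u ^ r * v ^ p * (a * v ^ q - c * u ^ q)
        - K * (v ^ r * u ^ p * (b * u ^ q - d * v ^ q))) * (u - K * v) ≤ 0) :
    (K = 1 ↔ a + d = b + c) ∧ (1 < K ↔ b + c < a + d) := by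
  have hKq_pos : 0 < K ^ q := Real.rpow_pos_of_pos hK q
  have hKr : 0 < K ^ r := Real.rpow_pos_of_pos hK r
  have hKp : 0 < K ^ p := Real.rpow_pos_of_pos hK p
  set h : ℝ → ℝ := fun u => u ^ r * (a - c * u ^ q) - K * (u ^ p * (b * u ^ q - d))
    with hh
  have hsign : ∀ u : ℝ, 0 ≤ u → h u * (u - K) ≤ 0 := by
    intro u hu
    have := hKprop u 1 hu zero_le_one
    simpa [hh, Real.one_rpow] using this
  have hcont : ContinuousAt h K := by
    have h1 : ContinuousAt (fun u : ℝ => u ^ r) K :=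
      Real.continuousAt_rpow_const K r (Or.inl hK.ne')
    have h2 : ContinuousAt (fun u : ℝ => u ^ q) K :=
      Real.continuousAt_rpow_const K q (Or.inl hK.ne')
    have h3 : ContinuousAt (fun u : ℝ => u ^ p) K :=
      Real.continuousAt_rpow_const K p (Or.inl hK.ne')
    exact (h1.mul ((continuousAt_const.sub (continuousAt_const.mul h2)))).sub
      (continuousAt_const.mul (h3.mul ((continuousAt_const.mul h2).sub continuousAt_const)))
  have hle : h K ≤ 0 := by
    have hne : (𝓝[>] K).NeBot := nhdsGT_neBot K
    have ht : Tendsto h (𝓝[>] K) (𝓝 (h K)) :=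
      hcont.tendsto.mono_left nhdsWithin_le_nhds
    refine le_of_tendsto ht ?_
    filter_upwards [self_mem_nhdsWithin] with u (hu : K < u)
    have hs := hsign u (hK.le.trans hu.le)
    by_contra hx
    push_neg at hx
    nlinarith
  have hge : 0 ≤ h K := by
    have hne : (𝓝[Ioo 0 K] K).NeBot := right_nhdsWithin_Ioo_neBot hK
    have ht : Tendsto h (𝓝[Ioo 0 K] K) (𝓝 (h K)) :=
      hcont.tendsto.mono_left nhdsWithin_le_nhds
    refine ge_of_tendsto ht ?_
    filter_upwards [self_mem_nhdsWithin] with u hu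
    have hs := hsign u hu.1.le
    by_contra hx
    push_neg at hx
    nlinarith [hu.2]
  have hE : K ^ r * (a - c * K ^ q) = K * (K ^ p * (b * K ^ q - d)) := by
    have := le_antisymm hle hge
    simp only [hh] at this
    linarith
  have hS : ((a - c) - K * (b - d)) * (1 - K) ≤ 0 := by
    have := hsign 1 zero_le_one
    simpa [hh, Real.one_rpow] using this
  have L2 : 1 < K → b + c < a + d := by
    intro hK1
    by_contra hcon
    push_neg at hcon
    have hS1 : 0 ≤ (a - c) - K * (b - d) := by
      by_contra hx
      push_neg at hx
      nlinarith [mul_pos_of_neg_of_neg hx (by linarith : 1 - K < 0)]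
    have hbd : b ≤ d := by
      by_contra hx
      push_neg at hx
      have h1 : 1 * (b - d) < K * (b - d) :=
        mul_lt_mul_of_pos_right hK1 (by linarith)
      linarith
    have hac : a ≤ c := by linarith
    have h1 : a * b ≤ c * b := mul_le_mul_of_nonneg_right hac hb.le
    have h2 : c * b ≤ c * d := mul_le_mul_of_nonneg_left hbd hc
    have hcb : c * b = a * b := le_antisymm (by linarith) h1
    have hca : c = a := mul_right_cancel₀ hb.ne' hcb
    have hdb : d = b := by
      have h3 : a * d ≤ a * b := by rw [hca] at habcd; exact habcd
      have : d ≤ b := le_of_mul_le_mul_left h3 ha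
      linarith
    have hKq1 : 1 < K ^ q :=
      (Real.one_lt_rpow_iff_of_pos hK).2 (Or.inl ⟨hK1, hq⟩)
    rw [hca, hdb] at hE
    nlinarith [mul_pos (mul_pos ha hKr) (sub_pos.mpr hKq1),
      mul_pos (mul_pos (mul_pos hb hK) hKp) (sub_pos.mpr hKq1)]
  have L3 : K < 1 → a + d < b + c := by
    intro hK1
    by_contra hcon
    push_neg at hcon
    have hS1 : (a - c) - K * (b - d) ≤ 0 := by
      by_contra hx
      push_neg at hx
      nlinarith [mul_pos hx (by linarith : (0:ℝ) < 1 - K)]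
    have hbd : b ≤ d := by
      by_contra hx
      push_neg at hx
      have h1 : K * (b - d) < 1 * (b - d) :=
        mul_lt_mul_of_pos_right hK1 (by linarith)
      linarith
    have hac : a ≤ c := by
      have : K * (b - d) ≤ 0 := mul_nonpos_of_nonneg_of_nonpos hK.le (by linarith)
      linarith
    have h1 : a * b ≤ c * b := mul_le_mul_of_nonneg_right hac hb.le
    have h2 : c * b ≤ c * d := mul_le_mul_of_nonneg_left hbd hc
    have hcb : c * b = a * b := le_antisymm (by linarith) h1
    have hca : c = a := mul_right_cancel₀ hb.ne' hcb
    have hdb : d = b := by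
      have h3 : a * d ≤ a * b := by rw [hca] at habcd; exact habcd
      have : d ≤ b := le_of_mul_le_mul_left h3 ha
      linarith
    have hKq1 : K ^ q < 1 := Real.rpow_lt_one hK.le hK1 hq
    rw [hca, hdb] at hE
    nlinarith [mul_pos (mul_pos ha hKr) (sub_pos.mpr hKq1),
      mul_pos (mul_pos (mul_pos hb hK) hKp) (sub_pos.mpr hKq1)]
  have L1 : K = 1 → a + d = b + c := by
    intro hK1
    rw [hK1] at hE
    simp [Real.one_rpow] at hE
    linarith
  refine ⟨⟨L1, fun hsum => ?_⟩, ⟨L2, fun hsum => ?_⟩⟩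
  · rcases lt_trichotomy K 1 with h' | h' | h'
    · exact absurd (L3 h') (by linarith)
    · exact h'
    · exact absurd (L2 h') (by linarith)
  · rcases lt_trichotomy K 1 with h' | h' | h'
    · exact absurd (L3 h') (by linarith)
    · exact absurd (L1 h') (by linarith)
    · exact h'
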